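/- arXiv:1103.5886 — 4 statements merged into one kernel-verified Lean document; each statement's English description precedes it below -/
import Mathlib

section
/- Let k ≥ 1 and ℓ ≥ 0 be integers and let α be a real number with |α| < 1. Then (1/ℓ!)·(d/dξ)^ℓ [ (1+α+ξ)^{k+2ℓ} / (1+ξ)^k ] evaluated at ξ = 0 equals (1+α)^{k+ℓ} · Σ_{m=0}^{ℓ} C(2ℓ−m, ℓ)·C(k+m−1, m)·(−α)^m, where C(a,b) denotes the binomial coefficient. -/
open Finset

/-- The `n`-th prime number (`nthPrime 0 = 2`). -/
noncomputable def nthPrime (n : ℕ) : ℕ := Nat.nth Nat.Prime n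

/-- The prime counting function `π(x)` at a real argument: the number of primes `≤ x`. -/
noncomputable def primePi (x : ℝ) : ℕ := Nat.primeCounting ⌊x⌋₊

/-- `P_H(n) = ∏_{h ∈ H} (n + h)`. -/
def tuplePoly (H : Finset ℕ) (n : ℕ) : ℕ := ∏ h ∈ H, (n + h)

/-- `ν_p(H)`: the number of distinct residue classes modulo `p` occupied by `H`. -/
def nuP (p : ℕ) (H : Finset ℕ) : ℕ := (H.image (· % p)).card

/-- `H` is admissible: for every prime `p`, the elements of `H` miss a residue class mod `p`. -/
def Admissible (H : Finset ℕ) : Prop := ∀ p : ℕ, p.Prime → nuP p H < p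

/-- The singular series `𝔖(H) = ∏_p (1 - 1/p)^{-|H|} (1 - ν_p(H)/p)`. -/
noncomputable def singularSeries (H : Finset ℕ) : ℝ :=
  ∏' p : Nat.Primes, ((1 - 1/((p : ℕ) : ℝ)) ^ (-(H.card : ℤ)) * (1 - (nuP p H : ℝ)/((p : ℕ) : ℝ)))

/-- `Λ_R(n; H, ℓ) = (1/(|H|+ℓ)!) ∑_{d ∣ P_H(n), d ≤ R} μ(d) (log (R/d))^{|H|+ℓ}`. -/
noncomputable def LambdaR (R : ℝ) (n : ℕ) (H : Finset ℕ) (ℓ : ℕ) : ℝ :=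
  (1 / (H.card + ℓ).factorial : ℝ) *
    ∑ d ∈ (tuplePoly H n).divisors.filter (fun d : ℕ => (d : ℝ) ≤ R),
      (ArithmeticFunction.moebius d : ℝ) * (Real.log (R / d)) ^ (H.card + ℓ)

/-- `𝒫(x)`: the product of all primes `≤ x`. -/
noncomputable def primorialReal (x : ℝ) : ℕ :=
  ∏ p ∈ (Finset.range (⌊x⌋₊ + 1)).filter Nat.Prime, p

/-- `θ(n) = log n` if `n` is prime, and `0` otherwise. -/
noncomputable def theta (n : ℕ) : ℝ := if n.Prime then Real.log n else 0

/-- `∑_{p ≤ N, p prime, p ≡ a (mod q)} log p`. -/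
noncomputable def primeSumAP (N q a : ℕ) : ℝ :=
  ∑ p ∈ (Finset.range (N+1)).filter (fun p => p.Prime ∧ p % q = a % q), Real.log p

/-- The primes have level of distribution `ϑ`: for every `A > 0` and `ε > 0`,
`∑_{q ≤ N^{ϑ-ε}} max_{(a,q)=1} |∑_{p ≤ N, p ≡ a (q)} log p - N/φ(q)| ≪_{A,ε} N (log N)^{-A}`
(the max over `a` is expressed via an arbitrary coprime choice function `a : ℕ → ℕ`). -/
def HasLevelOfDistribution (ϑ : ℝ) : Prop :=
  ∀ A : ℝ, 0 < A → ∀ ε : ℝ, 0 < ε → ∃ C : ℝ, 0 < C ∧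
    ∀ N : ℕ, 2 ≤ N → ∀ a : ℕ → ℕ, (∀ q : ℕ, Nat.Coprime (a q) q) →
      ∑ q ∈ Finset.Icc 1 ⌊(N : ℝ) ^ (ϑ - ε)⌋₊,
        |primeSumAP N q (a q) - (N : ℝ) / (Nat.totient q)| ≤ C * N / (Real.log N) ^ A

/-- The number of `j` with `N < p_j ≤ 2N` and `p_{j+1} - p_j ≤ h`. -/
noncomputable def gapCount (N : ℕ) (h : ℝ) : ℕ :=
  ((Finset.range (2*N+1)).filter (fun j =>
    N < nthPrime j ∧ nthPrime j ≤ 2*N ∧ ((nthPrime (j+1) : ℝ) - nthPrime j) ≤ h)).card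

/-- The number of `j` with `N < p_j ≤ 2N` and `p_{j+2} - p_j ≤ h`. -/
noncomputable def gapCount2 (N : ℕ) (h : ℝ) : ℕ :=
  ((Finset.range (2*N+1)).filter (fun j =>
    N < nthPrime j ∧ nthPrime j ≤ 2*N ∧ ((nthPrime (j+2) : ℝ) - nthPrime j) ≤ h)).card


private lemma coeff_one_sub_pow (d n : ℕ) :
    (PowerSeries.coeff n) ((1 - PowerSeries.X : PowerSeries ℤ) ^ d)
      = (-1) ^ n * d.choose n := by
  have h : (1 - PowerSeries.X : PowerSeries ℤ) ^ d
      = ∑ i ∈ Finset.range (d + 1),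
          PowerSeries.C (R := ℤ) ((-1) ^ i * d.choose i) * PowerSeries.X ^ i := by
    rw [sub_eq_add_neg, add_comm, add_pow]
    refine Finset.sum_congr rfl fun i hi => ?_
    rw [map_mul, map_pow, map_neg, map_one, map_natCast, neg_pow]
    ring
  rw [h, map_sum]
  simp only [PowerSeries.coeff_C_mul, PowerSeries.coeff_X_pow]
  rw [Finset.sum_eq_single n]
  · simp
  · intro i hi hne
    simp [Ne.symm hne]
  · intro hn
    simp only [Finset.mem_range, not_lt] at hn
    simp only [Finset.mem_range, not_lt] at *
    rw [Nat.choose_eq_zero_of_lt (by omega : d < n)]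
    simp

private lemma vand_neg (K N n : ℕ) (hK : 1 ≤ K) (hKN : K ≤ N) :
    ∑ i ∈ Finset.range (n + 1),
        (-1 : ℤ) ^ i * (N.choose (n - i)) * ((K - 1 + i).choose (K - 1))
      = (N - K).choose n := by
  have key : ((PowerSeries.invOneSubPow ℤ K : (PowerSeries ℤ)ˣ) : PowerSeries ℤ)
      * (1 - PowerSeries.X) ^ N = (1 - PowerSeries.X) ^ (N - K) := by
    conv_lhs => rw [show N = K + (N - K) by omega, pow_add, ← mul_assoc]
    rw [← PowerSeries.invOneSubPow_inv_eq_one_sub_pow ℤ K]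
    rw [(PowerSeries.invOneSubPow ℤ K).val_inv, one_mul]
  have hc := congrArg (PowerSeries.coeff (R := ℤ) n) key
  rw [PowerSeries.coeff_mul, Finset.Nat.sum_antidiagonal_eq_sum_range_succ_mk] at hc
  rw [coeff_one_sub_pow] at hc
  rw [PowerSeries.invOneSubPow_val_eq_mk_sub_one_add_choose_of_pos ℤ K hK] at hc
  simp only [PowerSeries.coeff_mk, coeff_one_sub_pow] at hc
  have h2 : ∀ i ∈ Finset.range (n + 1),
      (-1 : ℤ) ^ i * (N.choose (n - i)) * ((K - 1 + i).choose (K - 1))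
        = (-1) ^ n * (((K - 1 + i).choose (K - 1) : ℤ)
            * ((-1) ^ (n - i) * (N.choose (n - i)))) := by
    intro i hi
    rw [Finset.mem_range] at hi
    have hs : (-1 : ℤ) ^ n * (-1) ^ (n - i) = (-1) ^ i := by
      rw [← pow_add, show n + (n - i) = 2 * (n - i) + i by omega, pow_add, pow_mul]
      simp
    calc (-1 : ℤ) ^ i * (N.choose (n - i)) * ((K - 1 + i).choose (K - 1))
        = ((-1 : ℤ) ^ n * (-1) ^ (n - i)) * (N.choose (n - i)) * ((K - 1 + i).choose (K - 1)) := by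
          rw [hs]
      _ = (-1) ^ n * (((K - 1 + i).choose (K - 1) : ℤ)
            * ((-1) ^ (n - i) * (N.choose (n - i)))) := by ring
  rw [Finset.sum_congr rfl h2, ← Finset.mul_sum, hc]
  rw [← mul_assoc, ← pow_add]
  simp [pow_mul, show n + n = 2 * n by omega]

private lemma trinom (k m t : ℕ) (hk : 1 ≤ k) (ht : t ≤ m) :
    (k + m - 1).choose m * m.choose t = (k + t - 1).choose t * (k + m - 1).choose (m - t) := by
  have h1 : m.choose t = m.choose (m - t) := by
    rw [← Nat.choose_symm ht]
  rw [h1, Nat.choose_mul (Nat.sub_le m t)]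
  rw [show k + m - 1 - (m - t) = k + t - 1 by omega, show m - (m - t) = t by omega]
  ring

private lemma gpy_inner_sum (k ℓ t : ℕ) (hk : 1 ≤ k) (ht : t ≤ ℓ) :
    ∑ m ∈ Finset.range (ℓ + 1),
        (-1 : ℤ) ^ m * ((k + 2 * ℓ).choose (ℓ - m)) * ((k + m - 1).choose m) * (m.choose t)
      = (-1) ^ t * ((2 * ℓ - t).choose ℓ) * ((k + t - 1).choose t) := by
  have hsplit : ∑ m ∈ Finset.range (ℓ + 1),
      (-1 : ℤ) ^ m * ((k + 2 * ℓ).choose (ℓ - m)) * ((k + m - 1).choose m) * (m.choose t)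
      = ∑ m ∈ Finset.Ico t (ℓ + 1),
      (-1 : ℤ) ^ m * ((k + 2 * ℓ).choose (ℓ - m)) * ((k + m - 1).choose m) * (m.choose t) := by
    rw [Finset.range_eq_Ico, ← Finset.sum_Ico_consecutive _ (Nat.zero_le t) (by omega)]
    have : ∀ m ∈ Finset.Ico 0 t, (-1 : ℤ) ^ m * ((k + 2 * ℓ).choose (ℓ - m))
        * ((k + m - 1).choose m) * (m.choose t) = 0 := by
      intro m hm
      rw [Finset.mem_Ico] at hm
      rw [Nat.choose_eq_zero_of_lt hm.2]
      simp
    rw [Finset.sum_congr rfl this]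
    simp
  rw [hsplit, Finset.sum_Ico_eq_sum_range]
  have hterm : ∀ i ∈ Finset.range (ℓ + 1 - t),
      (-1 : ℤ) ^ (t + i) * ((k + 2 * ℓ).choose (ℓ - (t + i)))
          * ((k + (t + i) - 1).choose (t + i)) * ((t + i).choose t)
      = ((-1) ^ t * ((k + t - 1).choose t))
          * ((-1) ^ i * ((k + 2 * ℓ).choose ((ℓ - t) - i)) * ((k + t - 1 + i).choose (k + t - 1))) := by
    intro i hi
    rw [Finset.mem_range] at hi
    have h1 : ((k + t - 1 + i).choose (t + i) : ℤ) * ((t + i).choose t : ℤ)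
        = ((k + t - 1).choose t : ℤ) * ((k + t - 1 + i).choose (k + t - 1) : ℤ) := by
      have h0 := trinom k (t + i) t hk (by omega)
      rw [show (t + i) - t = i by omega] at h0
      rw [show k + (t + i) - 1 = k + t - 1 + i by omega] at h0
      rw [show (k + t - 1 + i).choose i = (k + t - 1 + i).choose (k + t - 1) by
        rw [show k + t - 1 + i = i + (k + t - 1) by omega]; exact Nat.choose_symm_add] at h0
      exact_mod_cast h0
    rw [show ℓ - (t + i) = (ℓ - t) - i by omega, show k + (t + i) - 1 = k + t - 1 + i by omega]
    linear_combination ((-1 : ℤ) ^ t * (-1) ^ i * ((k + 2 * ℓ).choose ((ℓ - t) - i) : ℤ)) * h1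
  rw [Finset.sum_congr rfl hterm, ← Finset.mul_sum]
  rw [show ℓ + 1 - t = (ℓ - t) + 1 by omega]
  have hv := vand_neg (k + t) (k + 2 * ℓ) (ℓ - t) (by omega) (by omega)
  rw [show k + t - 1 = k + t - 1 from rfl] at hv
  rw [hv]
  rw [show k + 2 * ℓ - (k + t) = 2 * ℓ - t by omega]
  have hsym : (2 * ℓ - t).choose (ℓ - t) = (2 * ℓ - t).choose ℓ := by
    rw [show ℓ - t = (2 * ℓ - t) - ℓ by omega]
    exact Nat.choose_symm (by omega)
  rw [hsym]
  ring

private noncomputable def Gfun (N : ℕ) (α : ℝ) (r : ℕ) : ℝ → ℝ :=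
  fun x => (∏ i ∈ Finset.range r, ((N : ℝ) - i)) * (1 + α + x) ^ (N - r)

private noncomputable def Hfun (k m : ℕ) : ℝ → ℝ :=
  fun x => (∏ i ∈ Finset.range m, (-(k : ℝ) - i)) * (1 + x) ^ (-(k : ℤ) - m)

private lemma hasDerivAt_Gfun (N : ℕ) (α : ℝ) (r : ℕ) (hr : r < N) (x : ℝ) :
    HasDerivAt (Gfun N α r) (Gfun N α (r + 1) x) x := by
  have h1 : HasDerivAt (fun y : ℝ => (1 + α + y) ^ (N - r))
      (((N - r : ℕ) : ℝ) * (1 + α + x) ^ (N - r - 1) * 1) x :=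
    ((hasDerivAt_id x).const_add (1 + α)).pow _
  have h2 := h1.const_mul (∏ i ∈ Finset.range r, ((N : ℝ) - i))
  refine HasDerivAt.congr_deriv h2 (Eq.symm ?_)
  unfold Gfun
  rw [Finset.prod_range_succ]
  rw [show N - (r + 1) = N - r - 1 by omega]
  rw [Nat.cast_sub hr.le]
  ring

private lemma hasDerivAt_Hfun (k m : ℕ) (x : ℝ) (hx : 1 + x ≠ 0) :
    HasDerivAt (Hfun k m) (Hfun k (m + 1) x) x := by
  have h1 : HasDerivAt (fun y : ℝ => y ^ (-(k : ℤ) - m))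
      ((((-(k : ℤ) - m : ℤ)) : ℝ) * (1 + x) ^ ((-(k : ℤ) - m) - 1)) (1 + x) :=
    hasDerivAt_zpow _ _ (Or.inl hx)
  have h2 := HasDerivAt.comp_const_add 1 x (by simpa using h1)
  have h3 := h2.const_mul (∏ i ∈ Finset.range m, (-(k : ℝ) - i))
  refine HasDerivAt.congr_deriv h3 (Eq.symm ?_)
  unfold Hfun
  rw [Finset.prod_range_succ]
  rw [show (-(k : ℤ) - (m + 1 : ℕ)) = (-(k : ℤ) - m) - 1 by push_cast; ring]
  push_cast
  ring

private lemma gpy_leibniz (N k ℓ0 : ℕ) (α : ℝ) (hN : ℓ0 < N) :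
    ∀ n, n ≤ ℓ0 → ∀ x : ℝ, 1 + x ≠ 0 →
      deriv^[n] (fun y => (1 + α + y) ^ N * (1 + y) ^ (-(k : ℤ))) x
        = ∑ m ∈ Finset.range (n + 1),
            (n.choose m : ℝ) * (Gfun N α (n - m) x * Hfun k m x) := by
  intro n
  induction n with
  | zero =>
    intro _ x hx
    simp [Gfun, Hfun]
  | succ n ih =>
    intro hn x hx
    rw [Function.iterate_succ_apply']
    have hopen : IsOpen {y : ℝ | 1 + y ≠ 0} :=
      isOpen_compl_singleton.preimage (continuous_const.add continuous_id)
    have hev : deriv^[n] (fun y => (1 + α + y) ^ N * (1 + y) ^ (-(k : ℤ)))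
        =ᶠ[nhds x] fun y => ∑ m ∈ Finset.range (n + 1),
            (n.choose m : ℝ) * (Gfun N α (n - m) y * Hfun k m y) := by
      filter_upwards [hopen.mem_nhds hx] with y hy
      exact ih (by omega) y hy
    rw [hev.deriv_eq]
    have hd : HasDerivAt (fun y => ∑ m ∈ Finset.range (n + 1),
        (n.choose m : ℝ) * (Gfun N α (n - m) y * Hfun k m y))
        (∑ m ∈ Finset.range (n + 1), (n.choose m : ℝ) *
          (Gfun N α (n - m + 1) x * Hfun k m x + Gfun N α (n - m) x * Hfun k (m + 1) x)) x := by
      apply HasDerivAt.fun_sum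
      intro m hm
      have hg := hasDerivAt_Gfun N α (n - m) (by omega) x
      have hh := hasDerivAt_Hfun k m x hx
      exact (hg.mul hh).const_mul ((n.choose m : ℝ))
    rw [hd.deriv]
    have hsplit := Finset.sum_choose_succ_mul
      (fun i j => Gfun N α j x * Hfun k i x) n
    rw [hsplit]
    rw [Finset.sum_congr rfl (fun m hm => by
      rw [Finset.mem_range] at hm
      rw [show n - m + 1 = n + 1 - m by omega, mul_add] :
        ∀ m ∈ Finset.range (n + 1), (n.choose m : ℝ) *
          (Gfun N α (n - m + 1) x * Hfun k m x + Gfun N α (n - m) x * Hfun k (m + 1) x)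
        = (n.choose m : ℝ) * (Gfun N α (n + 1 - m) x * Hfun k m x)
          + (n.choose m : ℝ) * (Gfun N α (n - m) x * Hfun k (m + 1) x)), Finset.sum_add_distrib]

private lemma prod_desc_nat (k m : ℕ) (hk : 1 ≤ k) :
    ∏ i ∈ Finset.range m, (k + i) = (k + m - 1).descFactorial m := by
  rw [Nat.descFactorial_eq_prod_range, ← Finset.prod_range_reflect]
  refine Finset.prod_congr rfl fun i hi => ?_
  rw [Finset.mem_range] at hi
  omega

private lemma pow_one_add_expand (x : ℝ) (m L : ℕ) (h : m ≤ L) :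
    (1 + x) ^ m = ∑ t ∈ Finset.range (L + 1), (m.choose t : ℝ) * x ^ t := by
  rw [add_comm (1 : ℝ) x, add_pow]
  simp only [one_pow, mul_one]
  rw [← Finset.sum_subset (Finset.range_subset_range.mpr (by omega : m + 1 ≤ L + 1))
      (fun t ht hnt => by
        rw [Finset.mem_range] at ht hnt
        rw [Nat.choose_eq_zero_of_lt (by omega)]
        simp)]
  exact Finset.sum_congr rfl fun t _ => (mul_comm _ _)

/-- **(2.4) of GPY IV.** For integers `k ≥ 1`, `ℓ ≥ 0` and a real `α` with `|α| < 1`,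
`(1/ℓ!) (d/dξ)^ℓ [(1+α+ξ)^{k+2ℓ}/(1+ξ)^k]|_{ξ=0}
 = (1+α)^{k+ℓ} ∑_{m=0}^{ℓ} C(2ℓ-m, ℓ) C(k+m-1, m) (-α)^m`. -/
theorem derivative_identity (k ℓ : ℕ) (hk : 1 ≤ k) (α : ℝ) (hα : |α| < 1) :
    (1 / ℓ.factorial : ℝ) *
        iteratedDeriv ℓ (fun ξ : ℝ => (1 + α + ξ) ^ (k + 2*ℓ) / (1 + ξ) ^ k) 0
      = (1 + α) ^ (k + ℓ) *
          ∑ m ∈ Finset.range (ℓ + 1),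
            (Nat.choose (2*ℓ - m) ℓ : ℝ) * (Nat.choose (k + m - 1) m : ℝ) * (-α) ^ m := by
  have hx0 : (1 : ℝ) + 0 ≠ 0 := by norm_num
  have hopen : IsOpen {y : ℝ | 1 + y ≠ 0} :=
    isOpen_compl_singleton.preimage (continuous_const.add continuous_id)
  have hev : (fun ξ : ℝ => (1 + α + ξ) ^ (k + 2*ℓ) / (1 + ξ) ^ k)
      =ᶠ[nhds 0] (fun ξ : ℝ => (1 + α + ξ) ^ (k + 2*ℓ) * (1 + ξ) ^ (-(k : ℤ))) := by
    filter_upwards [hopen.mem_nhds hx0] with y hy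
    rw [div_eq_mul_inv, ← zpow_natCast (1 + y) k, ← zpow_neg]
  rw [Filter.EventuallyEq.iteratedDeriv_eq ℓ hev, iteratedDeriv_eq_iterate,
    gpy_leibniz (k + 2*ℓ) k ℓ α (by omega) ℓ le_rfl 0 hx0]
  have key : ∀ m ∈ Finset.range (ℓ + 1),
      (ℓ.choose m : ℝ) * (Gfun (k + 2*ℓ) α (ℓ - m) 0 * Hfun k m 0)
      = (ℓ.factorial : ℝ) * ((1 + α) ^ (k + ℓ) *
          ((-1) ^ m * ((k + 2*ℓ).choose (ℓ - m) : ℝ)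
            * ((k + m - 1).choose m : ℝ) * (1 + α) ^ m)) := by
    intro m hm
    rw [Finset.mem_range] at hm
    have hG : Gfun (k + 2*ℓ) α (ℓ - m) 0
        = (((k + 2*ℓ).descFactorial (ℓ - m) : ℕ) : ℝ) * (1 + α) ^ (k + ℓ + m) := by
      unfold Gfun
      rw [add_zero, show k + 2*ℓ - (ℓ - m) = k + ℓ + m by omega]
      congr 1
      rw [Nat.descFactorial_eq_prod_range, Nat.cast_prod]
      refine Finset.prod_congr rfl fun i hi => ?_
      rw [Finset.mem_range] at hi
      rw [Nat.cast_sub (by omega)]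
    have hH : Hfun k m 0 = (-1 : ℝ) ^ m * (((k + m - 1).descFactorial m : ℕ) : ℝ) := by
      unfold Hfun
      rw [show (1 : ℝ) + 0 = 1 by norm_num, one_zpow, mul_one]
      rw [← prod_desc_nat k m hk, Nat.cast_prod]
      rw [show ((-1 : ℝ)) ^ m = ∏ _i ∈ Finset.range m, (-1 : ℝ) by
        rw [Finset.prod_const, Finset.card_range]]
      rw [← Finset.prod_mul_distrib]
      refine Finset.prod_congr rfl fun i _ => ?_
      push_cast
      ring
    rw [hG, hH, Nat.descFactorial_eq_factorial_mul_choose,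
      Nat.descFactorial_eq_factorial_mul_choose]
    have hfac : ((ℓ.choose m : ℕ) : ℝ) * ((m.factorial : ℕ) : ℝ) * (((ℓ - m).factorial : ℕ) : ℝ)
        = ((ℓ.factorial : ℕ) : ℝ) := by
      exact_mod_cast congrArg (Nat.cast : ℕ → ℝ)
        (Nat.choose_mul_factorial_mul_factorial (by omega : m ≤ ℓ))
    rw [show k + ℓ + m = (k + ℓ) + m from rfl, pow_add]
    push_cast
    linear_combination ((-1 : ℝ) ^ m * ((k + 2*ℓ).choose (ℓ - m) : ℝ)
      * ((k + m - 1).choose m : ℝ) * (1 + α) ^ (k + ℓ) * (1 + α) ^ m) * hfac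
  rw [Finset.sum_congr rfl key, ← Finset.mul_sum, ← mul_assoc, one_div,
    inv_mul_cancel₀ (by exact_mod_cast ℓ.factorial_ne_zero), one_mul, ← Finset.mul_sum]
  congr 1
  have hbin : ∀ m ∈ Finset.range (ℓ + 1),
      (-1 : ℝ) ^ m * ((k + 2*ℓ).choose (ℓ - m) : ℝ) * ((k + m - 1).choose m : ℝ) * (1 + α) ^ m
      = ∑ t ∈ Finset.range (ℓ + 1),
          ((-1 : ℝ) ^ m * ((k + 2*ℓ).choose (ℓ - m) : ℝ) * ((k + m - 1).choose m : ℝ)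
            * (m.choose t : ℝ)) * α ^ t := by
    intro m hm
    rw [Finset.mem_range] at hm
    rw [pow_one_add_expand α m ℓ (by omega), Finset.mul_sum]
    exact Finset.sum_congr rfl fun t _ => by ring
  rw [Finset.sum_congr rfl hbin, Finset.sum_comm]
  refine Finset.sum_congr rfl fun t ht => ?_
  rw [Finset.mem_range] at ht
  rw [← Finset.sum_mul]
  have hint : (∑ m ∈ Finset.range (ℓ + 1),
      (-1 : ℝ) ^ m * ((k + 2*ℓ).choose (ℓ - m) : ℝ) * ((k + m - 1).choose m : ℝ)
        * (m.choose t : ℝ))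
      = (-1) ^ t * ((2*ℓ - t).choose ℓ : ℝ) * ((k + t - 1).choose t : ℝ) := by
    exact_mod_cast congrArg (Int.cast : ℤ → ℝ) (gpy_inner_sum k ℓ t hk (by omega))
  rw [hint, neg_pow]
  ring
end

section
/- Let H ⊂ [1,h] be a k-element set of distinct integers, let R ≥ 2, δ ∈ (0,1), 0 ≤ ℓ < k, and let N < n ≤ 2N with h ≤ N. If (P_H(n), 𝒫(R^δ)) = 1 (i.e., every prime factor of P_H(n) exceeds R^δ), then |Λ_R(n;H,ℓ)| ≤ (2^{k·log(3N)/(δ·log R)} / (k+ℓ)!) · (log R)^{k+ℓ}. -/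
open Finset

/-- **(3.9) of GPY IV.** If `H ⊆ [1,h]` is a `k`-element set, `N < n ≤ 2N`, `h ≤ N`, and all
prime factors of `P_H(n)` exceed `R^δ`, then
`|Λ_R(n;H,ℓ)| ≤ (2^{k log(3N)/(δ log R)}/(k+ℓ)!) (log R)^{k+ℓ}`. -/
theorem LambdaR_pointwise_bound (k ℓ h N n : ℕ) (hk : 1 ≤ k) (hℓ : ℓ < k)
    (R δ : ℝ) (hR : 2 ≤ R) (hδ0 : 0 < δ) (hδ1 : δ < 1)
    (H : Finset ℕ) (hH : H ⊆ Finset.Icc 1 h) (hcard : H.card = k)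
    (hn1 : N < n) (hn2 : n ≤ 2*N) (hhN : h ≤ N)
    (hcop : Nat.Coprime (tuplePoly H n) (primorialReal (R ^ δ))) :
    |LambdaR R n H ℓ|
      ≤ (2 : ℝ) ^ ((k : ℝ) * Real.log (3*N) / (δ * Real.log R)) / (k + ℓ).factorial *
          (Real.log R) ^ (k + ℓ) := by
  have hR0 : (0:ℝ) < R := by linarith
  have hlogR : 0 < Real.log R := Real.log_pos (by linarith)
  set P := tuplePoly H n with hPdef
  have hhpos : 1 ≤ h := by
    obtain ⟨a, ha⟩ := Finset.card_pos.mp (by rw [hcard]; omega : 0 < H.card)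
    have := hH ha
    simp only [Finset.mem_Icc] at this
    omega
  have hN1 : 1 ≤ N := le_trans hhpos hhN
  have hPpos : 0 < P := Finset.prod_pos (fun i _ => by omega)
  -- every prime factor of P exceeds R^δ
  have hbig : ∀ p ∈ P.primeFactors, R ^ δ < (p : ℝ) := by
    intro p hp
    rw [Nat.mem_primeFactors] at hp
    obtain ⟨hpp, hpd, -⟩ := hp
    by_contra hle
    push_neg at hle
    have hple : p ≤ ⌊R ^ δ⌋₊ := Nat.le_floor hle
    have hdvd2 : p ∣ primorialReal (R ^ δ) := by
      apply Finset.dvd_prod_of_mem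
      simp only [Finset.mem_filter, Finset.mem_range]
      exact ⟨by omega, hpp⟩
    have hdvd : p ∣ Nat.gcd P (primorialReal (R ^ δ)) := Nat.dvd_gcd hpd hdvd2
    rw [hcop] at hdvd
    have := Nat.le_of_dvd one_pos hdvd
    have := hpp.two_le
    omega
  set ω := P.primeFactors.card with hωdef
  have hPle : (P : ℝ) ≤ (3 * (N:ℝ)) ^ k := by
    have h1 : P ≤ (3*N)^k := by
      calc P ≤ ∏ _i ∈ H, (3*N) := Finset.prod_le_prod' (fun i hi => by
              have := hH hi; simp only [Finset.mem_Icc] at this; omega)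
        _ = (3*N)^k := by rw [Finset.prod_const, hcard]
    calc (P:ℝ) ≤ (((3*N)^k : ℕ) : ℝ) := by exact_mod_cast h1
      _ = (3 * (N:ℝ)) ^ k := by push_cast; ring
  -- bound on ω
  have hωle : (ω : ℝ) ≤ (k : ℝ) * Real.log (3*N) / (δ * Real.log R) := by
    have h1 : (R ^ δ) ^ ω ≤ (P : ℝ) := by
      calc (R ^ δ) ^ ω = ∏ _p ∈ P.primeFactors, R ^ δ := (Finset.prod_const _).symm
        _ ≤ ∏ p ∈ P.primeFactors, (p : ℝ) :=
            Finset.prod_le_prod (fun _ _ => (Real.rpow_pos_of_pos hR0 δ).le)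
              (fun p hp => (hbig p hp).le)
        _ = ((∏ p ∈ P.primeFactors, p : ℕ) : ℝ) := by push_cast; ring
        _ ≤ (P : ℝ) := by
            exact_mod_cast Nat.le_of_dvd hPpos (Nat.prod_primeFactors_dvd P)
    have hlog : Real.log ((R ^ δ) ^ ω) ≤ Real.log ((3 * (N:ℝ)) ^ k) :=
      Real.log_le_log (by positivity) (h1.trans hPle)
    rw [Real.log_pow, Real.log_pow, Real.log_rpow hR0] at hlog
    rw [le_div_iff₀ (by positivity)]
    calc (ω:ℝ) * (δ * Real.log R) = (ω:ℝ) * (δ * Real.log R) := rfl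
      _ ≤ (k:ℝ) * Real.log (3 * (N:ℝ)) := by
          have := hlog
          push_cast at this ⊢
          nlinarith [this]
  -- the set of relevant (squarefree) divisors
  set D := P.divisors.filter (fun d : ℕ => (d : ℝ) ≤ R) with hDdef
  set S := D.filter (fun d : ℕ => Squarefree d) with hSdef
  have hScard : (S.card : ℝ) ≤ (2 : ℝ) ^ ((k : ℝ) * Real.log (3*N) / (δ * Real.log R)) := by
    have hcard2 : S.card ≤ 2 ^ ω := by
      have hinj : S.card ≤ P.primeFactors.powerset.card := by
        apply Finset.card_le_card_of_injOn (fun d => d.primeFactors)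
        · intro d hd
          simp only [hSdef, hDdef, Finset.mem_coe, Finset.mem_filter, Nat.mem_divisors] at hd
          exact Finset.mem_powerset.mpr
            (Nat.primeFactors_mono hd.1.1.1 hd.1.1.2)
        · intro a ha b hb hab
          simp only [hSdef, Finset.mem_coe, Finset.mem_filter] at ha hb
          rw [← Nat.prod_primeFactors_of_squarefree ha.2,
            ← Nat.prod_primeFactors_of_squarefree hb.2]
          exact congrArg (fun s => ∏ p ∈ s, p) hab
      rwa [Finset.card_powerset] at hinj
    calc (S.card : ℝ) ≤ ((2 ^ ω : ℕ) : ℝ) := by exact_mod_cast hcard2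
      _ = (2 : ℝ) ^ (ω : ℝ) := by
          rw [Real.rpow_natCast]; push_cast; ring
      _ ≤ (2 : ℝ) ^ ((k : ℝ) * Real.log (3*N) / (δ * Real.log R)) :=
          Real.rpow_le_rpow_of_exponent_le one_le_two hωle
  -- bound the sum
  have hsum : |∑ d ∈ D, (ArithmeticFunction.moebius d : ℝ) *
      (Real.log (R / d)) ^ (H.card + ℓ)| ≤ (S.card : ℝ) * (Real.log R) ^ (k + ℓ) := by
    calc |∑ d ∈ D, (ArithmeticFunction.moebius d : ℝ) * (Real.log (R / d)) ^ (H.card + ℓ)|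
        ≤ ∑ d ∈ D, |(ArithmeticFunction.moebius d : ℝ) * (Real.log (R / d)) ^ (H.card + ℓ)| :=
          Finset.abs_sum_le_sum_abs _ _
      _ = ∑ d ∈ S, |(ArithmeticFunction.moebius d : ℝ) * (Real.log (R / d)) ^ (H.card + ℓ)| := by
          rw [hSdef]
          refine (Finset.sum_filter_of_ne ?_).symm
          intro d _ hne
          by_contra hsq
          rw [ArithmeticFunction.moebius_eq_zero_of_not_squarefree hsq] at hne
          simp at hne
      _ ≤ ∑ _d ∈ S, (Real.log R) ^ (k + ℓ) := by
          apply Finset.sum_le_sum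
          intro d hd
          simp only [hSdef, hDdef, Finset.mem_filter, Nat.mem_divisors] at hd
          obtain ⟨⟨⟨hdvd, hne⟩, hdR⟩, hsq⟩ := hd
          have hd1 : 1 ≤ d := Nat.one_le_iff_ne_zero.mpr hsq.ne_zero
          have hd1R : (1:ℝ) ≤ (d:ℝ) := by exact_mod_cast hd1
          have hRd1 : (1:ℝ) ≤ R / d := (one_le_div (by linarith)).mpr hdR
          have hlognn : 0 ≤ Real.log (R / d) := Real.log_nonneg hRd1
          have hlogle : Real.log (R / d) ≤ Real.log R :=
            Real.log_le_log (by positivity) (by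
              rw [div_le_iff₀ (by linarith)]
              nlinarith)
          rw [abs_mul, abs_pow, abs_of_nonneg hlognn]
          have hmu : |(ArithmeticFunction.moebius d : ℝ)| ≤ 1 := by
            rw [ArithmeticFunction.moebius_apply_of_squarefree hsq]
            push_cast
            rw [abs_pow, abs_neg, abs_one, one_pow]
          have hHcard : H.card + ℓ = k + ℓ := by rw [hcard]
          rw [hHcard]
          calc |(ArithmeticFunction.moebius d : ℝ)| * Real.log (R / d) ^ (k + ℓ)
              ≤ 1 * Real.log (R / d) ^ (k + ℓ) := by
                apply mul_le_mul_of_nonneg_right hmu (by positivity)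
            _ = Real.log (R / d) ^ (k + ℓ) := one_mul _
            _ ≤ (Real.log R) ^ (k + ℓ) := pow_le_pow_left₀ hlognn hlogle _
      _ = (S.card : ℝ) * (Real.log R) ^ (k + ℓ) := by rw [Finset.sum_const, nsmul_eq_mul]
  -- conclude
  rw [hcard] at hsum
  rw [LambdaR, hcard, abs_mul, abs_of_nonneg (by positivity :
    (0:ℝ) ≤ 1 / (((k) + ℓ).factorial : ℝ)), ← hDdef]
  have hfac : (0:ℝ) < ((k + ℓ).factorial : ℝ) := by positivity
  calc (1 / ((k + ℓ).factorial : ℝ)) *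
      |∑ d ∈ D, (ArithmeticFunction.moebius d : ℝ) * (Real.log (R / d)) ^ (k + ℓ)|
      ≤ (1 / ((k + ℓ).factorial : ℝ)) * ((S.card : ℝ) * (Real.log R) ^ (k + ℓ)) :=
        mul_le_mul_of_nonneg_left hsum (by positivity)
    _ ≤ (1 / ((k + ℓ).factorial : ℝ)) *
        ((2 : ℝ) ^ ((k : ℝ) * Real.log (3*N) / (δ * Real.log R)) * (Real.log R) ^ (k + ℓ)) := by
        apply mul_le_mul_of_nonneg_left _ (by positivity)
        exact mul_le_mul_of_nonneg_right hScard (by positivity)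
    _ = (2 : ℝ) ^ ((k : ℝ) * Real.log (3*N) / (δ * Real.log R)) / (k + ℓ).factorial *
        (Real.log R) ^ (k + ℓ) := by ring
end

section
/- Let k ≥ 1 and 0 ≤ r ≤ k+2 be integers and let H₀ be a finite set with |H₀| = k+r. Then the number of quadruples (h', h'', H₁, H₂), where h', h'' ∈ H₀ (not necessarily distinct) and H₁, H₂ are k-element subsets of H₀ satisfying {h'} ∪ {h''} ∪ H₁ ∪ H₂ = H₀, equals (k+r)!·(k⁴ + 3k³ + (3r+2)k² + 4rk + r²) / (r!²·(k+2−r)!); equivalently, counting H₁ and H₂ as ordered k-tuples of distinct elements, the count is D(k,r) = k!²·(k+r)!·(k⁴ + 3k³ + (3r+2)k² + 4rk + r²) / (r!²·(k+2−r)!). -/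
open Finset

private lemma qc_card_filter_prod {β γ : Type*} (s : Finset β) (t : Finset γ)
    (P : β × γ → Prop) [DecidablePred P] [DecidableEq β] :
    ((s ×ˢ t).filter P).card = ∑ a ∈ s, (t.filter (fun b => P (a, b))).card := by
  rw [Finset.card_eq_sum_card_fiberwise (f := Prod.fst) (t := s)
    (fun x hx => (Finset.mem_product.1 (Finset.mem_filter.1 hx).1).1)]
  refine Finset.sum_congr rfl fun a ha => ?_
  have h : (((s ×ˢ t).filter P).filter (fun z => z.1 = a))
      = {a} ×ˢ (t.filter (fun b => P (a, b))) := by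
    ext ⟨x, y⟩
    simp only [mem_filter, mem_product, mem_singleton]
    constructor
    · rintro ⟨⟨⟨hx, hy⟩, hP⟩, rfl⟩; exact ⟨rfl, hy, hP⟩
    · rintro ⟨rfl, hy, hP⟩; exact ⟨⟨⟨ha, hy⟩, hP⟩, rfl⟩
  rw [h, card_product, card_singleton, one_mul]

private lemma qc_superset_count {α : Type*} [DecidableEq α] (s D : Finset α) (hD : D ⊆ s)
    (m : ℕ) (hm : D.card ≤ m) :
    ((s.powersetCard m).filter (fun A => D ⊆ A)).card
      = (s.card - D.card).choose (m - D.card) := by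
  rw [← Finset.card_sdiff_of_subset hD, ← Finset.card_powersetCard]
  apply Finset.card_bij' (fun A _ => A \ D) (fun S _ => S ∪ D)
  · intro A hA
    simp only [mem_filter, mem_powersetCard] at hA
    simp only [mem_powersetCard]
    exact ⟨sdiff_subset_sdiff hA.1.1 Finset.Subset.rfl,
      by rw [card_sdiff_of_subset hA.2, hA.1.2]⟩
  · intro S hS
    simp only [mem_powersetCard] at hS
    simp only [mem_filter, mem_powersetCard]
    have hdisj : Disjoint S D := disjoint_of_subset_left hS.1 sdiff_disjoint
    refine ⟨⟨union_subset (hS.1.trans sdiff_subset) hD, ?_⟩, subset_union_right⟩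
    rw [card_union_of_disjoint hdisj, hS.2]
    omega
  · intro A hA
    simp only [mem_filter, mem_powersetCard] at hA
    exact sdiff_union_of_subset hA.2
  · intro S hS
    simp only [mem_powersetCard] at hS
    have hdisj : Disjoint S D := disjoint_of_subset_left hS.1 sdiff_disjoint
    rw [union_sdiff_distrib, sdiff_self, bot_eq_empty, union_empty, sdiff_eq_self_of_disjoint hdisj]

private lemma qc_inter_count {α : Type*} [DecidableEq α] (s A D : Finset α) (hA : A ⊆ s)
    (hD : D ⊆ A) (m : ℕ) (hm : D.card ≤ m) :
    ((s.powersetCard m).filter (fun B => A ∩ B = D)).card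
      = (s \ A).card.choose (m - D.card) := by
  rw [← Finset.card_powersetCard]
  apply Finset.card_bij' (fun B _ => B \ D) (fun S _ => S ∪ D)
  · intro B hB
    simp only [mem_filter, mem_powersetCard] at hB
    obtain ⟨⟨hBs, hBc⟩, hABD⟩ := hB
    have hDB : D ⊆ B := hABD ▸ inter_subset_right
    simp only [mem_powersetCard]
    constructor
    · intro x hx
      simp only [mem_sdiff] at hx ⊢
      refine ⟨hBs hx.1, fun hxA => hx.2 ?_⟩
      rw [← hABD]; exact mem_inter.2 ⟨hxA, hx.1⟩
    · rw [card_sdiff_of_subset hDB, hBc]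
  · intro S hS
    simp only [mem_powersetCard] at hS
    have hSA : Disjoint S A := disjoint_of_subset_left hS.1 sdiff_disjoint
    have hSD : Disjoint S D := disjoint_of_subset_right hD hSA
    simp only [mem_filter, mem_powersetCard]
    refine ⟨⟨union_subset (hS.1.trans sdiff_subset) (hD.trans hA), ?_⟩, ?_⟩
    · rw [card_union_of_disjoint hSD, hS.2]; omega
    · rw [inter_union_distrib_left, (inter_eq_right).2 hD,
        disjoint_iff_inter_eq_empty.1 hSA.symm, empty_union]
  · intro B hB
    simp only [mem_filter, mem_powersetCard] at hB
    have hDB : D ⊆ B := hB.2 ▸ inter_subset_right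
    exact sdiff_union_of_subset hDB
  · intro S hS
    simp only [mem_powersetCard] at hS
    have hSD : Disjoint S D :=
      disjoint_of_subset_right hD (disjoint_of_subset_left hS.1 sdiff_disjoint)
    rw [union_sdiff_distrib, sdiff_self, bot_eq_empty, union_empty,
      sdiff_eq_self_of_disjoint hSD]

private lemma qc_pc {α : Type*} [DecidableEq α] (H₀ D : Finset α) (hD : D ⊆ H₀) :
    ((H₀ ×ˢ H₀).filter (fun p => D ⊆ ({p.1, p.2} : Finset α))).card
      = if D.card = 0 then H₀.card ^ 2 else if D.card = 1 then 2 * H₀.card - 1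
        else if D.card = 2 then 2 else 0 := by
  rcases eq_or_ne D.card 0 with h0 | h0
  · rw [if_pos h0, card_eq_zero.1 h0]
    simp only [empty_subset, filter_true_of_mem (fun _ _ => trivial), card_product, sq]
  rcases eq_or_ne D.card 1 with h1 | h1
  · rw [if_neg h0, if_pos h1]
    obtain ⟨a, rfl⟩ := card_eq_one.1 h1
    have haH : a ∈ H₀ := hD (mem_singleton_self a)
    have hset : (H₀ ×ˢ H₀).filter (fun p => ({a} : Finset α) ⊆ ({p.1, p.2} : Finset α))
        = ({a} ×ˢ H₀) ∪ (H₀ ×ˢ {a}) := by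
      ext ⟨x, y⟩
      simp only [mem_filter, mem_product, mem_union, mem_singleton,
        singleton_subset_iff, mem_insert, mem_singleton]
      constructor
      · rintro ⟨⟨hx, hy⟩, (rfl | rfl)⟩
        · exact Or.inl ⟨rfl, hy⟩
        · exact Or.inr ⟨hx, rfl⟩
      · rintro (⟨rfl, hy⟩ | ⟨hx, rfl⟩)
        · exact ⟨⟨haH, hy⟩, Or.inl rfl⟩
        · exact ⟨⟨hx, haH⟩, Or.inr rfl⟩
    have hinter : ({a} ×ˢ H₀) ∩ (H₀ ×ˢ {a}) = {(a, a)} := by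
      ext ⟨x, y⟩
      simp only [mem_inter, mem_product, mem_singleton, Prod.mk.injEq]
      constructor
      · rintro ⟨⟨rfl, hy⟩, hx, rfl⟩; exact ⟨rfl, rfl⟩
      · rintro ⟨rfl, rfl⟩; exact ⟨⟨rfl, haH⟩, haH, rfl⟩
    have := Finset.card_union_add_card_inter ({a} ×ˢ H₀) (H₀ ×ˢ {a})
    rw [hinter, hset] at *
    simp only [card_product, card_singleton, one_mul, mul_one] at this ⊢
    have hpos : 1 ≤ H₀.card := card_pos.2 ⟨a, haH⟩
    omega
  rcases eq_or_ne D.card 2 with h2 | h2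
  · rw [if_neg h0, if_neg h1, if_pos h2]
    obtain ⟨a, b, hab, rfl⟩ := card_eq_two.1 h2
    have haH : a ∈ H₀ := hD (by simp)
    have hbH : b ∈ H₀ := hD (by simp)
    have hset : (H₀ ×ˢ H₀).filter (fun p => ({a, b} : Finset α) ⊆ ({p.1, p.2} : Finset α))
        = {(a, b), (b, a)} := by
      ext ⟨x, y⟩
      simp only [mem_filter, mem_product, insert_subset_iff, singleton_subset_iff,
        mem_insert, mem_singleton, Prod.mk.injEq]
      constructor
      · rintro ⟨⟨hx, hy⟩, (rfl | rfl), (hb | hb)⟩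
        · exact absurd hb.symm hab
        · exact Or.inl ⟨rfl, hb.symm⟩
        · exact Or.inr ⟨hb.symm, rfl⟩
        · exact absurd hb.symm hab
      · rintro (⟨rfl, rfl⟩ | ⟨rfl, rfl⟩)
        · exact ⟨⟨haH, hbH⟩, Or.inl rfl, Or.inr rfl⟩
        · exact ⟨⟨hbH, haH⟩, Or.inr rfl, Or.inl rfl⟩
    rw [hset, card_insert_of_notMem (by simp [Prod.ext_iff, hab]), card_singleton]
  · rw [if_neg h0, if_neg h1, if_neg h2, Finset.card_eq_zero, Finset.filter_eq_empty_iff]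
    rintro ⟨x, y⟩ _ hsub
    have : D.card ≤ ({x, y} : Finset α).card := card_le_card hsub
    have h2' : ({x, y} : Finset α).card ≤ 2 := card_insert_le _ _ |>.trans (by simp)
    omega

private lemma qc_sc {α : Type*} [DecidableEq α] (H₀ D : Finset α) (hD : D ⊆ H₀) (r : ℕ) :
    ((H₀.powersetCard r ×ˢ H₀.powersetCard r).filter (fun q => q.1 ∩ q.2 = D)).card
      = if D.card ≤ r then
          (H₀.card - D.card).choose (r - D.card) * (H₀.card - r).choose (r - D.card)
        else 0 := by
  split_ifs with h
  · rw [qc_card_filter_prod]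
    have step : ∀ A ∈ H₀.powersetCard r,
        ((H₀.powersetCard r).filter (fun B => A ∩ B = D)).card
          = if D ⊆ A then (H₀.card - r).choose (r - D.card) else 0 := by
      intro A hA
      rw [mem_powersetCard] at hA
      split_ifs with hDA
      · rw [qc_inter_count H₀ A D hA.1 hDA r h, card_sdiff_of_subset hA.1, hA.2]
      · rw [Finset.card_eq_zero, Finset.filter_eq_empty_iff]
        intro B _ hAB
        exact hDA (hAB ▸ inter_subset_left)
    rw [Finset.sum_congr rfl step, Finset.sum_ite, Finset.sum_const_zero, add_zero,
      Finset.sum_const, smul_eq_mul, qc_superset_count H₀ D hD r h]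
  · rw [Finset.card_eq_zero, Finset.filter_eq_empty_iff]
    rintro ⟨A, B⟩ hAB hq
    simp only [mem_product, mem_powersetCard] at hAB
    apply h
    calc D.card = (A ∩ B).card := by rw [hq]
    _ ≤ A.card := card_le_card inter_subset_left
    _ = r := hAB.1.2

private lemma qc_cond {α : Type*} [DecidableEq α] (H₀ H₁ H₂ : Finset α) (h' h'' : α)
    (hh' : h' ∈ H₀) (hh'' : h'' ∈ H₀) (h1 : H₁ ⊆ H₀) (h2 : H₂ ⊆ H₀) :
    ({h'} ∪ {h''} ∪ H₁ ∪ H₂ = H₀) ↔ (H₀ \ H₁) ∩ (H₀ \ H₂) ⊆ ({h', h''} : Finset α) := by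
  constructor
  · intro h x hx
    simp only [mem_inter, mem_sdiff] at hx
    have hxH : x ∈ ({h'} : Finset α) ∪ {h''} ∪ H₁ ∪ H₂ := h ▸ hx.1.1
    simp only [mem_union, mem_singleton] at hxH
    simp only [mem_insert, mem_singleton]
    rcases hxH with ((hc | hc) | hc) | hc
    · exact Or.inl hc
    · exact Or.inr hc
    · exact absurd hc hx.1.2
    · exact absurd hc hx.2.2
  · intro h
    apply Finset.Subset.antisymm
    · refine union_subset (union_subset (union_subset ?_ ?_) h1) h2 <;>
        simp [hh', hh'']
    · intro x hx
      simp only [mem_union, mem_singleton]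
      by_cases hx1 : x ∈ H₁
      · exact Or.inl (Or.inr hx1)
      by_cases hx2 : x ∈ H₂
      · exact Or.inr hx2
      have hmem := h (mem_inter.2 ⟨mem_sdiff.2 ⟨hx, hx1⟩, mem_sdiff.2 ⟨hx, hx2⟩⟩)
      simp only [mem_insert, mem_singleton] at hmem
      rcases hmem with rfl | rfl
      · exact Or.inl (Or.inl (Or.inl rfl))
      · exact Or.inl (Or.inl (Or.inr rfl))

private lemma qc_count {α : Type*} [DecidableEq α] (k r : ℕ) (H₀ : Finset α)
    (hcard : H₀.card = k + r) :
    (((H₀ ×ˢ H₀) ×ˢ (H₀.powersetCard k ×ˢ H₀.powersetCard k)).filter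
        (fun x => {x.1.1} ∪ {x.1.2} ∪ x.2.1 ∪ x.2.2 = H₀)).card
      = (k+r)^2 * ((k+r).choose r * k.choose r)
        + (k+r) * ((2*(k+r) - 1) *
            (if 1 ≤ r then (k+r-1).choose (r-1) * k.choose (r-1) else 0))
        + (k+r).choose 2 * (2 *
            (if 2 ≤ r then (k+r-2).choose (r-2) * k.choose (r-2) else 0)) := by
  have hbij : (((H₀ ×ˢ H₀) ×ˢ (H₀.powersetCard k ×ˢ H₀.powersetCard k)).filter
        (fun x => {x.1.1} ∪ {x.1.2} ∪ x.2.1 ∪ x.2.2 = H₀)).card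
      = (((H₀ ×ˢ H₀) ×ˢ (H₀.powersetCard r ×ˢ H₀.powersetCard r)).filter
        (fun x => x.2.1 ∩ x.2.2 ⊆ ({x.1.1, x.1.2} : Finset α))).card := by
    apply Finset.card_bij' (fun x _ => (x.1, (H₀ \ x.2.1, H₀ \ x.2.2)))
      (fun x _ => (x.1, (H₀ \ x.2.1, H₀ \ x.2.2)))
    · rintro ⟨⟨h', h''⟩, H₁, H₂⟩ hx
      simp only [mem_filter, mem_product, mem_powersetCard] at hx ⊢
      obtain ⟨⟨⟨hh', hh''⟩, ⟨hH1, hH1c⟩, hH2, hH2c⟩, hcond⟩ := hx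
      refine ⟨⟨⟨hh', hh''⟩, ⟨sdiff_subset, ?_⟩, sdiff_subset, ?_⟩, ?_⟩
      · rw [card_sdiff_of_subset hH1, hcard, hH1c]; omega
      · rw [card_sdiff_of_subset hH2, hcard, hH2c]; omega
      · exact (qc_cond H₀ H₁ H₂ h' h'' hh' hh'' hH1 hH2).1 hcond
    · rintro ⟨⟨h', h''⟩, A, B⟩ hx
      have hA := (mem_powersetCard.1 (mem_product.1 (mem_product.1 (mem_filter.1 hx).1).2).1).1
      have hB := (mem_powersetCard.1 (mem_product.1 (mem_product.1 (mem_filter.1 hx).1).2).2).1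
      dsimp only at hA hB ⊢
      rw [Finset.sdiff_sdiff_eq_self hA, Finset.sdiff_sdiff_eq_self hB]
    · rintro ⟨⟨h', h''⟩, H₁, H₂⟩ hx
      have hA := (mem_powersetCard.1 (mem_product.1 (mem_product.1 (mem_filter.1 hx).1).2).1).1
      have hB := (mem_powersetCard.1 (mem_product.1 (mem_product.1 (mem_filter.1 hx).1).2).2).1
      dsimp only at hA hB ⊢
      rw [Finset.sdiff_sdiff_eq_self hA, Finset.sdiff_sdiff_eq_self hB]
    · rintro ⟨⟨h', h''⟩, A, B⟩ hx
      obtain ⟨⟨⟨hh', hh''⟩, ⟨hA, hAc⟩, hB, hBc⟩, hcond⟩ :=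
        (by simpa only [mem_filter, mem_product, mem_powersetCard] using hx :
          ((h' ∈ H₀ ∧ h'' ∈ H₀) ∧ (A ⊆ H₀ ∧ A.card = r) ∧ B ⊆ H₀ ∧ B.card = r) ∧
            A ∩ B ⊆ ({h', h''} : Finset α))
      dsimp only
      simp only [mem_filter, mem_product, mem_powersetCard]
      refine ⟨⟨⟨hh', hh''⟩, ⟨sdiff_subset, ?_⟩, sdiff_subset, ?_⟩, ?_⟩
      · rw [card_sdiff_of_subset hA, hcard, hAc]; omega
      · rw [card_sdiff_of_subset hB, hcard, hBc]; omega
      · rw [qc_cond H₀ _ _ h' h'' hh' hh'' sdiff_subset sdiff_subset,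
          Finset.sdiff_sdiff_eq_self hA, Finset.sdiff_sdiff_eq_self hB]
        exact hcond
  rw [hbij]
  rw [Finset.card_eq_sum_card_fiberwise
      (f := fun x => x.2.1 ∩ x.2.2) (t := H₀.powerset)
      (fun x hx => by
        simp only [mem_coe, mem_filter, mem_product, mem_powersetCard] at hx
        exact mem_powerset.2 (inter_subset_left.trans hx.1.2.1.1))]
  have hfib : ∀ D ∈ H₀.powerset,
      ((((H₀ ×ˢ H₀) ×ˢ (H₀.powersetCard r ×ˢ H₀.powersetCard r)).filter
        (fun x => x.2.1 ∩ x.2.2 ⊆ ({x.1.1, x.1.2} : Finset α))).filter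
          (fun x => x.2.1 ∩ x.2.2 = D)).card
      = (fun c => (if c = 0 then H₀.card ^ 2 else if c = 1 then 2 * H₀.card - 1
            else if c = 2 then 2 else 0)
          * (if c ≤ r then
              (H₀.card - c).choose (r - c) * (H₀.card - r).choose (r - c)
            else 0)) D.card := by
    intro D hD
    rw [mem_powerset] at hD
    rw [filter_filter]
    have hsplit : (((H₀ ×ˢ H₀) ×ˢ (H₀.powersetCard r ×ˢ H₀.powersetCard r)).filter
        (fun x => (x.2.1 ∩ x.2.2 ⊆ ({x.1.1, x.1.2} : Finset α)) ∧ x.2.1 ∩ x.2.2 = D))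
        = ((H₀ ×ˢ H₀).filter (fun p => D ⊆ ({p.1, p.2} : Finset α))) ×ˢ
          ((H₀.powersetCard r ×ˢ H₀.powersetCard r).filter (fun q => q.1 ∩ q.2 = D)) := by
      rw [← filter_product]
      apply filter_congr
      rintro ⟨p, q⟩ _
      constructor
      · rintro ⟨hsub, heq⟩; rw [heq] at hsub; exact ⟨hsub, heq⟩
      · rintro ⟨hsub, heq⟩; rw [← heq] at hsub; exact ⟨hsub, heq⟩
    rw [hsplit, card_product, qc_pc H₀ D hD, qc_sc H₀ D hD r]
  rw [Finset.sum_congr rfl hfib]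
  rw [Finset.sum_powerset_apply_card
    (fun c => (if c = 0 then H₀.card ^ 2 else if c = 1 then 2 * H₀.card - 1
        else if c = 2 then 2 else 0)
      * (if c ≤ r then (H₀.card - c).choose (r - c) * (H₀.card - r).choose (r - c) else 0))]
  rw [hcard]
  rw [show (∑ m ∈ Finset.range (k + r + 1), (k + r).choose m •
        ((if m = 0 then (k+r) ^ 2 else if m = 1 then 2 * (k+r) - 1
            else if m = 2 then 2 else 0)
          * (if m ≤ r then (k+r - m).choose (r - m) * (k+r - r).choose (r - m) else 0)))
      = ∑ m ∈ Finset.range 3, (k + r).choose m •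
        ((if m = 0 then (k+r) ^ 2 else if m = 1 then 2 * (k+r) - 1
            else if m = 2 then 2 else 0)
          * (if m ≤ r then (k+r - m).choose (r - m) * (k+r - r).choose (r - m) else 0))
    from by
      rw [Finset.sum_subset (Finset.range_subset_range.2 (by omega : k + r + 1 ≤ k + r + 3))
        (fun m hm hnot => by
          simp only [mem_range] at hm hnot
          rw [Nat.choose_eq_zero_of_lt (by omega), zero_smul]),
        Finset.sum_subset (Finset.range_subset_range.2 (by omega : 3 ≤ k + r + 3))
        (fun m hm hnot => by
          simp only [mem_range] at hm hnot
          rw [if_neg (by omega), if_neg (by omega), if_neg (by omega), zero_mul, smul_zero])]]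
  rw [Finset.sum_range_succ, Finset.sum_range_succ, Finset.sum_range_one]
  simp only [Nat.choose_zero_right, Nat.choose_one_right, Nat.add_sub_cancel,
    Nat.sub_zero, smul_eq_mul, one_mul]
  norm_num

set_option maxHeartbeats 2000000 in
private lemma qc_arith (k r : ℕ) (hk : 1 ≤ k) (hr : r ≤ k + 2) :
    (((k+r)^2 * ((k+r).choose r * k.choose r)
      + (k+r) * ((2*(k+r) - 1) *
          (if 1 ≤ r then (k+r-1).choose (r-1) * k.choose (r-1) else 0))
      + (k+r).choose 2 * (2 *
          (if 2 ≤ r then (k+r-2).choose (r-2) * k.choose (r-2) else 0)) : ℕ) : ℚ)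
      = ((k+r).factorial : ℚ) *
          ((k:ℚ)^4 + 3*(k:ℚ)^3 + (3*(r:ℚ)+2)*(k:ℚ)^2 + 4*(r:ℚ)*(k:ℚ) + (r:ℚ)^2)
          / ((r.factorial : ℚ)^2 * ((k+2-r).factorial : ℚ)) := by
  have hfac : ∀ n : ℕ, ((n.factorial : ℚ)) ≠ 0 :=
    fun n => Nat.cast_ne_zero.2 (Nat.factorial_ne_zero n)
  have hfs : ∀ n : ℕ, ((n+1).factorial : ℚ) = (n+1) * (n.factorial : ℚ) := by
    intro n; rw [Nat.factorial_succ]; push_cast; ring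
  rcases Nat.lt_or_ge r 2 with h2 | h2
  · interval_cases r
    · -- r = 0
      simp only [Nat.add_zero, Nat.choose_zero_right, Nat.sub_zero, mul_one, one_mul]
      norm_num
      rw [show k+2 = (k+1)+1 from rfl, hfs, hfs]
      field_simp
      push_cast; ring
    · -- r = 1
      norm_num
      field_simp
      ring
  · obtain ⟨s, rfl⟩ : ∃ s, r = s + 2 := ⟨r - 2, by omega⟩
    have hsk : s ≤ k := by omega
    rcases Nat.lt_or_ge s k with hlt | hge
    · rcases Nat.lt_or_ge (s+1) k with hlt2 | hge2
      · -- s + 2 ≤ k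
        obtain ⟨m, rfl⟩ : ∃ m, k = s + 2 + m := ⟨k - (s+2), by omega⟩
        norm_num
        simp only [show s+2+m+(s+2)-2 = 2*s+m+2 from by omega]
        simp only [show s+2+m+(s+2) = 2*s+m+4 from by omega,
          show s+2+m+(s+1) = 2*s+m+3 from by omega,
          show s+2+m+2-(s+2) = m+2 from by omega]
        simp only [show s+2+m = s+m+2 from by omega,
          show s+m+2+(s+2) = 2*s+m+4 from by omega,
          show s+m+2+(s+1) = 2*s+m+3 from by omega,
          show s+m+2+(s+2)-2 = 2*s+m+2 from by omega,
          show s+m+2+2-(s+2) = m+2 from by omega]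
        rw [Nat.cast_choose ℚ (show s+2 ≤ 2*s+m+4 by omega),
          Nat.cast_choose ℚ (show s+2 ≤ s+m+2 by omega),
          Nat.cast_choose ℚ (show s+1 ≤ 2*s+m+3 by omega),
          Nat.cast_choose ℚ (show s+1 ≤ s+m+2 by omega),
          Nat.cast_choose ℚ (show s ≤ 2*s+m+2 by omega),
          Nat.cast_choose ℚ (show s ≤ s+m+2 by omega),
          Nat.cast_choose ℚ (show 2 ≤ 2*s+m+4 by omega)]
        simp only [show 2*s+m+4-(s+2) = s+m+2 from by omega,
          show s+m+2-(s+2) = m from by omega,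
          show 2*s+m+3-(s+1) = s+m+2 from by omega,
          show s+m+2-(s+1) = m+1 from by omega,
          show 2*s+m+2-s = s+m+2 from by omega,
          show s+m+2-s = m+2 from by omega,
          show 2*s+m+4-2 = 2*s+m+2 from by omega]
        have F1 : (((2*s+m+4).factorial : ℕ) : ℚ)
            = (2*(s:ℚ)+(m:ℚ)+4)*(2*(s:ℚ)+(m:ℚ)+3)*(((2*s+m+2).factorial : ℕ) : ℚ) := by
          rw [show 2*s+m+4 = (2*s+m+3)+1 from by omega, hfs,
            show 2*s+m+3 = (2*s+m+2)+1 from by omega, hfs]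
          push_cast; ring
        have F6 : (((2*s+m+3).factorial : ℕ) : ℚ)
            = (2*(s:ℚ)+(m:ℚ)+3)*(((2*s+m+2).factorial : ℕ) : ℚ) := by
          rw [show 2*s+m+3 = (2*s+m+2)+1 from by omega, hfs]; push_cast; ring
        have F2 : (((s+2).factorial : ℕ) : ℚ)
            = ((s:ℚ)+2)*((s:ℚ)+1)*((s.factorial : ℕ) : ℚ) := by
          rw [show s+2 = (s+1)+1 from by omega, hfs, hfs]; push_cast; ring
        have F3 : (((s+1).factorial : ℕ) : ℚ) = ((s:ℚ)+1)*((s.factorial : ℕ) : ℚ) := by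
          rw [hfs]
        have F4 : (((m+2).factorial : ℕ) : ℚ)
            = ((m:ℚ)+2)*((m:ℚ)+1)*((m.factorial : ℕ) : ℚ) := by
          rw [show m+2 = (m+1)+1 from by omega, hfs, hfs]; push_cast; ring
        have F5 : (((m+1).factorial : ℕ) : ℚ) = ((m:ℚ)+1)*((m.factorial : ℕ) : ℚ) := by
          rw [hfs]
        rw [F1, F6, F2, F3, F4, F5, Nat.factorial_two]
        field_simp
        ring
      · -- k = s+1
        have : k = s + 1 := by omega
        subst this
        norm_num
        simp only [show s+1+(s+2)-2 = 2*s+1 from by omega,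
          show s+1+2-(s+2) = 1 from by omega]
        simp only [show s+1+(s+1) = 2*s+2 from by omega,
          show s+1+(s+2) = 2*s+3 from by omega,
          show 2*s+3-2 = 2*s+1 from by omega]
        rw [Nat.cast_choose ℚ (show s+1 ≤ 2*s+2 by omega),
          Nat.cast_choose ℚ (show s ≤ 2*s+1 by omega),
          Nat.cast_choose ℚ (show 2 ≤ 2*s+3 by omega)]
        simp only [show 2*s+2-(s+1) = s+1 from by omega,
          show 2*s+1-s = s+1 from by omega,
          show 2*s+3-2 = 2*s+1 from by omega]
        have F1 : (((2*s+3).factorial : ℕ) : ℚ)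
            = (2*(s:ℚ)+3)*(2*(s:ℚ)+2)*(((2*s+1).factorial : ℕ) : ℚ) := by
          rw [show 2*s+3 = (2*s+2)+1 from by omega, hfs,
            show 2*s+2 = (2*s+1)+1 from by omega, hfs]
          push_cast; ring
        have F6 : (((2*s+2).factorial : ℕ) : ℚ)
            = (2*(s:ℚ)+2)*(((2*s+1).factorial : ℕ) : ℚ) := by
          rw [show 2*s+2 = (2*s+1)+1 from by omega, hfs]; push_cast; ring
        have F2 : (((s+2).factorial : ℕ) : ℚ)
            = ((s:ℚ)+2)*((s:ℚ)+1)*((s.factorial : ℕ) : ℚ) := by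
          rw [show s+2 = (s+1)+1 from by omega, hfs, hfs]; push_cast; ring
        have F3 : (((s+1).factorial : ℕ) : ℚ) = ((s:ℚ)+1)*((s.factorial : ℕ) : ℚ) := by
          rw [hfs]
        rw [F1, F6, F2, F3, Nat.factorial_two, Nat.factorial_one]
        field_simp
        ring
    · -- k = s
      have : k = s := by omega
      subst this
      norm_num
      rw [Nat.choose_eq_zero_of_lt (show k < k + 2 by omega)]
      norm_num
      simp only [show k+(k+2)-2 = 2*k from by omega]
      simp only [show k+(k+2) = 2*k+2 from by omega,
        show 2*k+2-2 = 2*k from by omega]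
      rw [Nat.cast_choose ℚ (show k ≤ 2*k by omega),
        Nat.cast_choose ℚ (show 2 ≤ 2*k+2 by omega)]
      simp only [show 2*k+2-(k+2) = k from by omega,
        show 2*k-k = k from by omega,
        show 2*k+2-2 = 2*k from by omega]
      have F1 : (((2*k+2).factorial : ℕ) : ℚ)
          = (2*(k:ℚ)+2)*(2*(k:ℚ)+1)*(((2*k).factorial : ℕ) : ℚ) := by
        rw [show 2*k+2 = (2*k+1)+1 from by omega, hfs,
          show 2*k+1 = (2*k)+1 from by omega, hfs]
        push_cast; ring
      have F2 : (((k+2).factorial : ℕ) : ℚ)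
          = ((k:ℚ)+2)*((k:ℚ)+1)*((k.factorial : ℕ) : ℚ) := by
        rw [show k+2 = (k+1)+1 from by omega, hfs, hfs]; push_cast; ring
      rw [F1, F2, Nat.factorial_two]
      field_simp
      ring

/-- **(3.14) of GPY IV.** For `1 ≤ k`, `0 ≤ r ≤ k+2`, and a finite set `H₀` with
`|H₀| = k+r`, the number of quadruples `(h', h'', H₁, H₂)` with `h', h'' ∈ H₀` (not
necessarily distinct) and `H₁, H₂` `k`-element subsets of `H₀` such that
`{h'} ∪ {h''} ∪ H₁ ∪ H₂ = H₀` equals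
`(k+r)!(k⁴+3k³+(3r+2)k²+4rk+r²)/(r!²(k+2-r)!)`; equivalently, counting `H₁, H₂` as ordered
`k`-tuples of distinct elements multiplies the count by `k!²`, giving `D(k,r)`. -/
theorem quadruple_count {α : Type*} [DecidableEq α] (k r : ℕ) (hk : 1 ≤ k) (hr : r ≤ k + 2)
    (H₀ : Finset α) (hcard : H₀.card = k + r) :
    ((((H₀ ×ˢ H₀) ×ˢ (H₀.powersetCard k ×ˢ H₀.powersetCard k)).filter
        (fun x => {x.1.1} ∪ {x.1.2} ∪ x.2.1 ∪ x.2.2 = H₀)).card : ℚ)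
      = ((k+r).factorial : ℚ) * ((k:ℚ)^4 + 3*(k:ℚ)^3 + (3*(r:ℚ)+2)*(k:ℚ)^2 + 4*(r:ℚ)*(k:ℚ) + (r:ℚ)^2)
          / ((r.factorial : ℚ)^2 * ((k+2-r).factorial : ℚ))
    ∧ ((k.factorial : ℚ))^2 *
        ((((H₀ ×ˢ H₀) ×ˢ (H₀.powersetCard k ×ˢ H₀.powersetCard k)).filter
          (fun x => {x.1.1} ∪ {x.1.2} ∪ x.2.1 ∪ x.2.2 = H₀)).card : ℚ)
      = ((k.factorial : ℚ))^2 * ((k+r).factorial : ℚ) *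
          ((k:ℚ)^4 + 3*(k:ℚ)^3 + (3*(r:ℚ)+2)*(k:ℚ)^2 + 4*(r:ℚ)*(k:ℚ) + (r:ℚ)^2)
          / ((r.factorial : ℚ)^2 * ((k+2-r).factorial : ℚ)) := by
  have hm := qc_count k r H₀ hcard
  have h1 : ((((H₀ ×ˢ H₀) ×ˢ (H₀.powersetCard k ×ˢ H₀.powersetCard k)).filter
        (fun x => {x.1.1} ∪ {x.1.2} ∪ x.2.1 ∪ x.2.2 = H₀)).card : ℚ)
      = ((k+r).factorial : ℚ) * ((k:ℚ)^4 + 3*(k:ℚ)^3 + (3*(r:ℚ)+2)*(k:ℚ)^2 + 4*(r:ℚ)*(k:ℚ) + (r:ℚ)^2)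
          / ((r.factorial : ℚ)^2 * ((k+2-r).factorial : ℚ)) := by
    rw [hm]
    exact_mod_cast qc_arith k r hk hr
  refine ⟨h1, ?_⟩
  rw [h1]
  ring
end

section
/- Let k ≥ 1 be an integer and define D(k,r) = k!²·(k+r)!·(k⁴ + 3k³ + (3r+2)k² + 4rk + r²) / (r!²·(k+2−r)!) for 0 ≤ r ≤ k+2. Then for every real u > 0, Σ_{r=0}^{k+2} (k+r)!·D(k,r)·u^{k+r} ≤ ((2k+2)!)²·u^k·(1+u)^{k+2}. -/
open Finset

/-- `D(k,r) = k!²(k+r)!(k⁴+3k³+(3r+2)k²+4rk+r²)/(r!²(k+2-r)!)`, as a real number. -/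
noncomputable def Dkr (k r : ℕ) : ℝ :=
  (k.factorial : ℝ)^2 * ((k+r).factorial : ℝ) *
      ((k:ℝ)^4 + 3*(k:ℝ)^3 + (3*(r:ℝ)+2)*(k:ℝ)^2 + 4*(r:ℝ)*(k:ℝ) + (r:ℝ)^2)
    / ((r.factorial : ℝ)^2 * ((k+2-r).factorial : ℝ))


def Qn (k r : ℕ) : ℕ := k^4+3*k^3+(3*r+2)*k^2+4*r*k+r^2

lemma keyAux (k : ℕ) : ∀ d, d ≤ k+2 →
    ((k+(k+2-d)).factorial)^2 * (k.factorial)^2 * Qn k (k+2-d)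
      ≤ ((2*k+2).factorial)^2 * (k+2).factorial * (k+2-d).factorial := by
  intro d
  induction d with
  | zero =>
    intro _
    have h1 : k + (k+2-0) = 2*k+2 := by omega
    have h2 : k+2-0 = k+2 := by omega
    rw [h1, h2]
    have hq : Qn k (k+2) = ((k+1)*(k+2))^2 := by unfold Qn; ring
    have hf : (k+2).factorial = (k+1)*(k+2) * k.factorial := by
      rw [Nat.factorial_succ, Nat.factorial_succ]; ring
    rw [hq, hf]; ring_nf; omega
  | succ d ih =>
    intro hd
    set r := k+2-(d+1) with hr
    have h1 : k+2-d = r+1 := by omega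
    have IH := ih (by omega)
    rw [h1] at IH
    have hQmono : Qn k r ≤ Qn k (r+1) := by unfold Qn; nlinarith
    have hfs : (k+(r+1)).factorial = (k+r+1) * (k+r).factorial := by
      have : k+(r+1) = (k+r)+1 := by omega
      rw [this, Nat.factorial_succ]
    have key2 : ((k+r).factorial)^2 * (k.factorial)^2 * Qn k r * (r+1)
        ≤ ((k+(r+1)).factorial)^2 * (k.factorial)^2 * Qn k (r+1) := by
      rw [hfs]
      have h3 : r+1 ≤ (k+r+1)^2 := by nlinarith
      calc ((k+r).factorial)^2 * (k.factorial)^2 * Qn k r * (r+1)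
          ≤ ((k+r).factorial)^2 * (k.factorial)^2 * Qn k (r+1) * (k+r+1)^2 := by
            apply Nat.mul_le_mul (Nat.mul_le_mul_left _ hQmono) h3
        _ = ((k+r+1) * (k+r).factorial)^2 * (k.factorial)^2 * Qn k (r+1) := by ring
    have hfr : (r+1).factorial = (r+1) * r.factorial := Nat.factorial_succ r
    rw [hfr] at IH
    have : ((k+r).factorial)^2 * (k.factorial)^2 * Qn k r * (r+1)
        ≤ ((2*k+2).factorial)^2 * (k+2).factorial * r.factorial * (r+1) := by
      calc _ ≤ ((k+(r+1)).factorial)^2 * (k.factorial)^2 * Qn k (r+1) := key2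
        _ ≤ ((2*k+2).factorial)^2 * (k+2).factorial * ((r+1) * r.factorial) := IH
        _ = ((2*k+2).factorial)^2 * (k+2).factorial * r.factorial * (r+1) := by ring
    exact Nat.le_of_mul_le_mul_right this (by omega)

lemma key (k r : ℕ) (hr : r ≤ k+2) :
    ((k+r).factorial)^2 * (k.factorial)^2 * Qn k r
      ≤ ((2*k+2).factorial)^2 * (k+2).factorial * r.factorial := by
  have h := keyAux k (k+2-r) (by omega)
  have : k+2-(k+2-r) = r := by omega
  rwa [this] at h

/-- **(3.15) of GPY IV.** For `k ≥ 1` and `u > 0`,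
`∑_{r=0}^{k+2} (k+r)! D(k,r) u^{k+r} ≤ ((2k+2)!)² u^k (1+u)^{k+2}`. -/
theorem Dkr_sum_bound (k : ℕ) (hk : 1 ≤ k) (u : ℝ) (hu : 0 < u) :
    ∑ r ∈ Finset.range (k+3), ((k+r).factorial : ℝ) * Dkr k r * u ^ (k+r)
      ≤ ((2*k+2).factorial : ℝ)^2 * u ^ k * (1+u) ^ (k+2) := by
  have hterm : ∀ r ∈ Finset.range (k+3),
      ((k+r).factorial : ℝ) * Dkr k r * u ^ (k+r)
        ≤ ((2*k+2).factorial : ℝ)^2 * ((k+2).choose r : ℝ) * u ^ (k+r) := by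
    intro r hrm
    have hr : r ≤ k+2 := by simpa using Nat.lt_succ_iff.mp (Finset.mem_range.mp hrm)
    apply mul_le_mul_of_nonneg_right _ (le_of_lt (pow_pos hu _))
    unfold Dkr
    rw [mul_div_assoc', div_le_iff₀ (by positivity)]
    have hnat : ((k+r).factorial)^2 * (k.factorial)^2 * Qn k r
        ≤ ((2*k+2).factorial)^2 * ((k+2).choose r) * (r.factorial^2 * (k+2-r).factorial) := by
      have hc : (k+2).choose r * r.factorial * (k+2-r).factorial = (k+2).factorial :=
        Nat.choose_mul_factorial_mul_factorial hr
      calc ((k+r).factorial)^2 * (k.factorial)^2 * Qn k r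
          ≤ ((2*k+2).factorial)^2 * (k+2).factorial * r.factorial := key k r hr
        _ = ((2*k+2).factorial)^2 * ((k+2).choose r) * (r.factorial^2 * (k+2-r).factorial) := by
            rw [← hc]; ring
    have := (Nat.cast_le (α := ℝ)).mpr hnat
    push_cast at this
    unfold Qn at this
    push_cast at this
    nlinarith [this]
  calc ∑ r ∈ Finset.range (k+3), ((k+r).factorial : ℝ) * Dkr k r * u ^ (k+r)
      ≤ ∑ r ∈ Finset.range (k+3), ((2*k+2).factorial : ℝ)^2 * ((k+2).choose r : ℝ) * u ^ (k+r) :=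
        Finset.sum_le_sum hterm
    _ = ((2*k+2).factorial : ℝ)^2 * u ^ k * (1+u) ^ (k+2) := by
        rw [add_comm (1:ℝ) u, add_pow]
        rw [Finset.mul_sum]
        apply Finset.sum_congr rfl
        intro r hr
        rw [pow_add]
        simp
        ring
end
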